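/- Let u ∈ H¹((0,1)×(0,∞)) be 1-periodic in y₁ with ∫₀¹ u(y₁, y₂) dy₁ = 0 for a.e. y₂ ≥ 0 and ∇u ∈ L²((0,1)×(0,∞)). If -Δu = 0 in (0,1)×(0,∞) (weakly), then |u(y₁, y₂)| ≤ C e^{-2π y₂} for all y₂ ≥ 1, for some constant C depending on u. -/

import Mathlib

open MeasureTheory Set Real intervalIntegral

lemma hasDerivAt_param (F F' : ℝ → ℝ → ℂ) (t₀ : ℝ)
    (hF : Continuous (Function.uncurry F))
    (hF' : Continuous (Function.uncurry F'))
    (hdiff : ∀ (x t : ℝ), HasDerivAt (fun s => F s x) (F' t x) t) :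
    HasDerivAt (fun s => ∫ x in (0:ℝ)..1, F s x) (∫ x in (0:ℝ)..1, F' t₀ x) t₀ := by
  obtain ⟨C, hC⟩ := (isCompact_Icc.prod isCompact_Icc :
      IsCompact (Icc (t₀-1) (t₀+1) ×ˢ Icc (0:ℝ) 1)).exists_bound_of_continuousOn
      hF'.continuousOn
  have hmeas : ∀ s : ℝ, Continuous (F s) := fun s =>
    hF.comp (Continuous.prodMk_right s)
  have hmeas' : ∀ s : ℝ, Continuous (F' s) := fun s =>
    hF'.comp (Continuous.prodMk_right s)
  have key := intervalIntegral.hasDerivAt_integral_of_dominated_loc_of_deriv_le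
    (𝕜 := ℝ) (μ := volume) (a := 0) (b := 1) (F := F) (F' := F') (x₀ := t₀)
    (bound := fun _ => C) (s := Metric.ball t₀ 1) (Metric.ball_mem_nhds _ one_pos)
    (Filter.Eventually.of_forall fun s => (hmeas s).aestronglyMeasurable)
    ((hmeas t₀).intervalIntegrable _ _)
    ((hmeas' t₀).aestronglyMeasurable)
    ?_ (intervalIntegrable_const) ?_
  · exact key.2
  · refine Filter.Eventually.of_forall fun x hx s hs => ?_
    refine hC (s, x) ⟨?_, ?_⟩
    · have := Metric.mem_ball.mp hs
      rw [Real.dist_eq] at this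
      constructor <;> [linarith [abs_lt.mp this]; linarith [(abs_lt.mp this).2]]
    · have : x ∈ Set.Ioc (0:ℝ) 1 := by simpa [Set.uIoc_of_le (by norm_num : (0:ℝ) ≤ 1)] using hx
      exact ⟨this.1.le, this.2⟩
  · exact Filter.Eventually.of_forall fun x hx s hs => hdiff x s

lemma const_of_deriv0 (f : ℝ → ℂ) (hf : ∀ t, 0 < t → HasDerivAt f 0 t) {a b : ℝ}
    (ha : 0 < a) (hb : a ≤ b) : f b = f a := by
  have := constant_of_has_deriv_right_zero (f := f) (a := a) (b := b)
    (fun x hx => ((hf x (lt_of_lt_of_le ha hx.1)).continuousAt).continuousWithinAt)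
    (fun x hx => (hf x (lt_of_lt_of_le ha hx.1)).hasDerivWithinAt)
  exact this b ⟨hb, le_refl b⟩

lemma ode_exp_decay (c d : ℝ → ℂ) (l : ℝ) (hl : 1 ≤ l)
    (hc : ∀ t, 0 < t → HasDerivAt c (d t) t)
    (hd : ∀ t, 0 < t → HasDerivAt d (((l:ℂ)^2) * c t) t)
    (hb : ∀ T : ℝ, ∃ t, T ≤ t ∧ ‖c t‖ ≤ 1 ∧ ‖d t‖ ≤ 1) :
    ∀ t, (1/2:ℝ) ≤ t → c t = (Real.exp (-(l * (t - 1/2))) : ℝ) * c (1/2) := by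
  have hl0 : 0 < l := by linarith
  have hexp : ∀ (a t : ℝ), HasDerivAt (fun s => ((Real.exp (a*s) : ℝ) : ℂ))
      ((a * Real.exp (a*t) : ℝ) : ℂ) t := by
    intro a t
    have h1 : HasDerivAt (fun s : ℝ => a * s) a t := by
      simpa using (hasDerivAt_id t).const_mul a
    exact (by simpa [mul_comm] using h1.exp :
      HasDerivAt (fun s => Real.exp (a*s)) (a * Real.exp (a*t)) t).ofReal_comp
  set W : ℝ → ℂ := fun t => ((Real.exp (-l*t) : ℝ) : ℂ) * (d t + l * c t) with hWdef
  have hWd : ∀ t, 0 < t → HasDerivAt W 0 t := by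
    intro t ht
    have h2 : HasDerivAt (fun s => d s + (l:ℂ) * c s) ((l:ℂ)^2 * c t + l * d t) t :=
      (hd t ht).add ((hc t ht).const_mul _)
    have := (hexp (-l) t).mul h2
    refine this.congr_deriv ?_
    push_cast
    ring
  have hWc : ∀ t, 0 < t → W t = W 1 := fun t ht => by
    rcases le_total 1 t with h | h
    · exact const_of_deriv0 W hWd one_pos h
    · exact (const_of_deriv0 W hWd ht h).symm
  have hW1 : W 1 = 0 := by
    have hbnd : ∀ n : ℕ, ‖W 1‖ ≤ (1 + l) * Real.exp (-l) ^ n := by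
      intro n
      obtain ⟨t, hT, hct, hdt⟩ := hb (max 1 (n : ℝ))
      have ht1 : (1:ℝ) ≤ t := le_trans (le_max_left _ _) hT
      have htn : (n:ℝ) ≤ t := le_trans (le_max_right _ _) hT
      rw [← hWc t (by linarith)]
      have : ‖W t‖ = Real.exp (-l*t) * ‖d t + l * c t‖ := by
        rw [hWdef]
        rw [norm_mul, Complex.norm_real, Real.norm_eq_abs, Real.abs_exp]
      rw [this]
      have h1 : ‖d t + (l:ℂ) * c t‖ ≤ 1 + l := by
        calc ‖d t + (l:ℂ) * c t‖ ≤ ‖d t‖ + ‖(l:ℂ) * c t‖ := norm_add_le _ _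
        _ ≤ 1 + l * 1 := by
            rw [norm_mul]
            gcongr
            rw [Complex.norm_real, Real.norm_eq_abs]
            exact le_of_eq (abs_of_pos hl0)
        _ = 1 + l := by ring
      have h2 : Real.exp (-l*t) ≤ Real.exp (-l) ^ n := by
        rw [← Real.exp_nat_mul]
        apply Real.exp_le_exp.mpr
        nlinarith
      calc Real.exp (-l*t) * ‖d t + (l:ℂ) * c t‖ ≤ Real.exp (-l) ^ n * (1 + l) := by
            apply mul_le_mul h2 h1 (norm_nonneg _) (by positivity)
      _ = (1 + l) * Real.exp (-l) ^ n := by ring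
    have htend : Filter.Tendsto (fun n : ℕ => (1 + l) * Real.exp (-l) ^ n)
        Filter.atTop (nhds 0) := by
      rw [show (0:ℝ) = (1+l) * 0 by ring]
      exact (tendsto_pow_atTop_nhds_zero_of_lt_one (Real.exp_nonneg _)
        (by rw [Real.exp_lt_one_iff]; linarith)).const_mul _
    have := ge_of_tendsto' htend hbnd
    have h0 : ‖W 1‖ ≤ 0 := this
    simpa using le_antisymm h0 (norm_nonneg _)
  have hW0 : ∀ t, 0 < t → d t = -(l:ℂ) * c t := by
    intro t ht
    have h := (hWc t ht).trans hW1
    rw [hWdef] at h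
    simp only [mul_eq_zero] at h
    rcases h with h | h
    · exact absurd h (by exact_mod_cast Real.exp_ne_zero _)
    · linear_combination h
  set V : ℝ → ℂ := fun t => ((Real.exp (l*t) : ℝ) : ℂ) * c t with hVdef
  have hVd : ∀ t, 0 < t → HasDerivAt V 0 t := by
    intro t ht
    have := (hexp l t).mul (hc t ht)
    rw [hW0 t ht] at this
    refine this.congr_deriv ?_
    push_cast
    ring
  intro t ht
  have hVc : V t = V (1/2) := by
    rcases le_total (1/2 : ℝ) t with h | h
    · exact const_of_deriv0 V hVd (by norm_num) h
    · exact (const_of_deriv0 V hVd (by linarith) h).symm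
  rw [hVdef] at hVc
  simp only [Complex.ofReal_exp] at hVc
  rw [Complex.ofReal_exp]
  have hstep : c t = Complex.exp (-(↑(l*t) : ℂ)) * (Complex.exp ((↑(l*t) : ℂ)) * c t) := by
    rw [← mul_assoc, ← Complex.exp_add, neg_add_cancel, Complex.exp_zero, one_mul]
  rw [hstep, hVc, ← mul_assoc, ← Complex.exp_add]
  congr 2
  push_cast
  ring

lemma slice_small (F : ℝ × ℝ → ℝ) (hF : IntegrableOn F ((Ioo (0:ℝ) 1) ×ˢ (Ioi (0:ℝ)))) :
    ∀ T : ℝ, ∃ t, T ≤ t ∧ 0 < t ∧ (∫ x in Ioo (0:ℝ) 1, F (x, t)) ≤ 1 := by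
  intro T
  by_contra hcon
  push_neg at hcon
  set g : ℝ → ℝ := fun t => ∫ x in Ioo (0:ℝ) 1, F (x, t) with hg
  have hint : Integrable g (volume.restrict (Ioi (0:ℝ))) := by
    have : Integrable F ((volume.restrict (Ioo (0:ℝ) 1)).prod (volume.restrict (Ioi (0:ℝ)))) := by
      rw [Measure.prod_restrict]
      rw [← Measure.volume_eq_prod]
      exact hF
    exact this.integral_prod_right
  set T' : ℝ := max T 1 with hT'
  have hgt : ∀ t ∈ Ioi T', 1 < g t := by
    intro t ht
    have h1 : T ≤ t := le_trans (le_max_left _ _) (le_of_lt ht)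
    have h2 : (0:ℝ) < t := lt_of_lt_of_le (by norm_num : (0:ℝ) < 1)
      (le_trans (le_max_right _ _) (le_of_lt ht))
    exact hcon t h1 h2
  have hconst : IntegrableOn (fun _ : ℝ => (1:ℝ)) (Ioi T') := by
    have hsub : Ioi T' ⊆ Ioi (0:ℝ) := fun x hx =>
      lt_trans (lt_of_lt_of_le one_pos (le_max_right T 1)) hx
    refine Integrable.mono' (IntegrableOn.mono_set hint hsub) aestronglyMeasurable_const ?_
    · refine (ae_restrict_iff' measurableSet_Ioi).mpr (Filter.Eventually.of_forall fun t ht => ?_)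
      simp only [norm_one]
      exact le_of_lt (hgt t ht)
  have : volume (Ioi T') < ⊤ := by
    rcases (integrableOn_const_iff (C := (1:ℝ)) (μ := volume) (s := Ioi T')).mp hconst with h | h
    · norm_num at h
    · exact h
  simp [Real.volume_Ioi] at this

theorem stmt12 (u : ℝ × ℝ → ℝ) (hu : ContDiff ℝ 2 u)
    (hper : ∀ y₁ y₂ : ℝ, u (y₁ + 1, y₂) = u (y₁, y₂))
    (hmean : ∀ y₂ : ℝ, 0 ≤ y₂ → (∫ y₁ in (0:ℝ)..1, u (y₁, y₂)) = 0)
    (hgrad : IntegrableOn (fun y => ‖fderiv ℝ u y‖^2) ((Ioo (0:ℝ) 1) ×ˢ (Ioi (0:ℝ))))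
    (hharm : ∀ y : ℝ × ℝ, 0 < y.2 →
      deriv (fun t => deriv (fun s => u (s, y.2)) t) y.1
        + deriv (fun t => deriv (fun s => u (y.1, s)) t) y.2 = 0) :
    ∃ C : ℝ, ∀ y₁ y₂ : ℝ, 1 ≤ y₂ →
      |u (y₁, y₂)| ≤ C * Real.exp (-2 * π * y₂) := by
  haveI : Fact ((0:ℝ) < 1) := ⟨one_pos⟩
  have hud : Differentiable ℝ u := hu.differentiable (by norm_num)
  set u₁ : ℝ × ℝ → ℝ := fun y => fderiv ℝ u y (1, 0) with hu1def
  set u₂ : ℝ × ℝ → ℝ := fun y => fderiv ℝ u y (0, 1) with hu2def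
  have hu1 : ContDiff ℝ 1 u₁ := (hu.fderiv_right (by norm_num)).clm_apply contDiff_const
  have hu2 : ContDiff ℝ 1 u₂ := (hu.fderiv_right (by norm_num)).clm_apply contDiff_const
  have hu1d : Differentiable ℝ u₁ := hu1.differentiable (by norm_num)
  have hu2d : Differentiable ℝ u₂ := hu2.differentiable (by norm_num)
  set u₁₁ : ℝ × ℝ → ℝ := fun y => fderiv ℝ u₁ y (1, 0) with hu11def
  set u₂₂ : ℝ × ℝ → ℝ := fun y => fderiv ℝ u₂ y (0, 1) with hu22def
  have cu : Continuous u := hu.continuous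
  have cu1 : Continuous u₁ := hu1.continuous
  have cu2 : Continuous u₂ := hu2.continuous
  have cu11 : Continuous u₁₁ :=
    ((hu1.fderiv_right (m := 0) (by norm_num)).clm_apply contDiff_const).continuous
  have cu22 : Continuous u₂₂ :=
    ((hu2.fderiv_right (m := 0) (by norm_num)).clm_apply contDiff_const).continuous
  -- slice derivatives
  have hder1 : ∀ (f : ℝ×ℝ→ℝ), Differentiable ℝ f → ∀ (x t : ℝ),
      HasDerivAt (fun s => f (s, t)) (fderiv ℝ f (x,t) (1,0)) x := by
    intro f hf x t
    have h1 : HasDerivAt (fun s : ℝ => (s, t)) ((1:ℝ), (0:ℝ)) x :=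
      (hasDerivAt_id x).prodMk (hasDerivAt_const x t)
    exact (hf (x,t)).hasFDerivAt.comp_hasDerivAt x h1
  have hder2 : ∀ (f : ℝ×ℝ→ℝ), Differentiable ℝ f → ∀ (x t : ℝ),
      HasDerivAt (fun s => f (x, s)) (fderiv ℝ f (x,t) (0,1)) t := by
    intro f hf x t
    have h1 : HasDerivAt (fun s : ℝ => (x, s)) ((0:ℝ), (1:ℝ)) t :=
      (hasDerivAt_const t x).prodMk (hasDerivAt_id t)
    exact (hf (x,t)).hasFDerivAt.comp_hasDerivAt t h1
  -- harmonic equation in terms of u₁₁ u₂₂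
  have harm : ∀ (x t : ℝ), 0 < t → u₂₂ (x, t) = - u₁₁ (x, t) := by
    intro x t ht
    have h := hharm (x, t) ht
    simp only at h
    have e1 : (deriv fun z => u (z, t)) = fun s => u₁ (s, t) :=
      funext fun s => (hder1 u hud s t).deriv
    have e2 : (deriv fun z => u (x, z)) = fun s => u₂ (x, s) :=
      funext fun s => (hder2 u hud x s).deriv
    rw [e1, e2] at h
    rw [(hder1 u₁ hu1d x t).deriv, (hder2 u₂ hu2d x t).deriv] at h
    linarith
  -- periodicity of u₁
  have hperF : ∀ y : ℝ × ℝ, fderiv ℝ u (y + (1,0)) = fderiv ℝ u y := by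
    intro y
    have hcomp : (fun z : ℝ×ℝ => u (z + ((1:ℝ),(0:ℝ)))) = u := by
      funext z
      have hz : z + ((1:ℝ),(0:ℝ)) = (z.1 + 1, z.2) := by
        ext <;> simp
      rw [hz]
      exact hper z.1 z.2
    conv_rhs => rw [← hcomp]
    have hτ : HasFDerivAt (fun z : ℝ×ℝ => z + ((1:ℝ),(0:ℝ)))
        (ContinuousLinearMap.id ℝ (ℝ×ℝ)) y := (hasFDerivAt_id y).add_const _
    have hcomp' : HasFDerivAt (fun z : ℝ×ℝ => u (z + ((1:ℝ),(0:ℝ))))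
        ((fderiv ℝ u (y + (1,0))).comp (ContinuousLinearMap.id ℝ (ℝ×ℝ))) y :=
      (hud (y + (1,0))).hasFDerivAt.comp y hτ
    rw [hcomp'.fderiv, ContinuousLinearMap.comp_id]
  have per1 : ∀ x t : ℝ, u₁ (x + 1, t) = u₁ (x, t) := by
    intro x t
    have : ((x:ℝ) + 1, t) = ((x,t) : ℝ×ℝ) + (1,0) := by ext <;> simp
    rw [hu1def]
    simp only
    rw [this, hperF]
  -- exponentials
  set e : ℤ → ℝ → ℂ := fun n x => (fourier (-n) (x : AddCircle (1:ℝ)) : ℂ) with hedef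
  have he_cont : ∀ n, Continuous (e n) := fun n =>
    (fourier (-n)).continuous.comp (AddCircle.continuous_mk' (1:ℝ))
  have he_deriv : ∀ (n : ℤ) (x : ℝ),
      HasDerivAt (e n) (2 * π * Complex.I * (-n) * e n x) x := by
    intro n x
    have := hasDerivAt_fourier (1:ℝ) (-n) x
    simpa [hedef] using this
  have he_per : ∀ (n : ℤ) (x : ℝ), e n (x + 1) = e n x := by
    intro n x
    simp only [hedef]
    rw [AddCircle.coe_add_period (1:ℝ) x]
  have he_norm : ∀ (n : ℤ) (x : ℝ), ‖e n x‖ = 1 := by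
    intro n x
    rw [hedef]
    simp only [fourier_apply, Circle.norm_coe]
  -- Fourier coefficients as functions of t
  set c : ℤ → ℝ → ℂ := fun n t => ∫ x in (0:ℝ)..1, e n x * (u (x, t) : ℂ) with hcdef
  set d : ℤ → ℝ → ℂ := fun n t => ∫ x in (0:ℝ)..1, e n x * (u₂ (x, t) : ℂ) with hddef
  have hcd : ∀ (n : ℤ) (t : ℝ), HasDerivAt (c n) (d n t) t := by
    intro n t
    have := hasDerivAt_param (fun s x => e n x * (u (x, s) : ℂ))
      (fun s x => e n x * (u₂ (x, s) : ℂ)) t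
      (((he_cont n).comp continuous_snd).mul
        (Complex.continuous_ofReal.comp (cu.comp (continuous_snd.prodMk continuous_fst))))
      (((he_cont n).comp continuous_snd).mul
        (Complex.continuous_ofReal.comp (cu2.comp (continuous_snd.prodMk continuous_fst))))
      (fun x s => ((hder2 u hud x s).ofReal_comp).const_mul (e n x))
    exact this
  have hdd' : ∀ (n : ℤ) (t : ℝ),
      HasDerivAt (d n) (∫ x in (0:ℝ)..1, e n x * (u₂₂ (x, t) : ℂ)) t := by
    intro n t
    exact hasDerivAt_param (fun s x => e n x * (u₂ (x, s) : ℂ))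
      (fun s x => e n x * (u₂₂ (x, s) : ℂ)) t
      (((he_cont n).comp continuous_snd).mul
        (Complex.continuous_ofReal.comp (cu2.comp (continuous_snd.prodMk continuous_fst))))
      (((he_cont n).comp continuous_snd).mul
        (Complex.continuous_ofReal.comp (cu22.comp (continuous_snd.prodMk continuous_fst))))
      (fun x s => ((hder2 u₂ hu2d x s).ofReal_comp).const_mul (e n x))
  -- integration by parts
  have parts : ∀ (n : ℤ) (t : ℝ) (v : ℝ×ℝ→ℝ), Differentiable ℝ v → Continuous v →
      Continuous (fun y => fderiv ℝ v y (1,0)) →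
      (v (1, t) = v (0, t)) →
      ∫ x in (0:ℝ)..1, e n x * (fderiv ℝ v (x,t) (1,0) : ℂ)
        = (2 * π * Complex.I * n) * ∫ x in (0:ℝ)..1, e n x * (v (x, t) : ℂ) := by
    intro n t v hv cv cv1
    intro hbd
    have hparts := intervalIntegral.integral_mul_deriv_eq_deriv_mul
      (u := e n) (u' := fun x => 2 * π * Complex.I * (-n) * e n x)
      (v := fun x => (v (x, t) : ℂ)) (v' := fun x => (fderiv ℝ v (x,t) (1,0) : ℂ))
      (fun x _ => he_deriv n x)
      (fun x _ => (hder1 v hv x t).ofReal_comp)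
      (Continuous.intervalIntegrable (by
        exact continuous_const.mul (he_cont n)) 0 1)
      (Continuous.intervalIntegrable (Complex.continuous_ofReal.comp
        (cv1.comp (continuous_id.prodMk continuous_const))) 0 1)
    rw [hparts]
    have hb0 : e n 1 * (v (1,t) : ℂ) - e n 0 * (v (0,t) : ℂ) = 0 := by
      have h1 : e n 1 = e n 0 := by
        have := he_per n 0
        rw [zero_add] at this
        exact this
      rw [h1, hbd]
      ring
    rw [hb0]
    have : ∫ x in (0:ℝ)..1, (2 * π * Complex.I * (-n) * e n x) * (v (x,t) : ℂ)
        = (2 * π * Complex.I * (-n)) * ∫ x in (0:ℝ)..1, e n x * (v (x,t) : ℂ) := by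
      rw [← intervalIntegral.integral_const_mul]
      congr 1
      funext x
      ring
    rw [this]
    push_cast
    ring
  have I1 : ∀ (n : ℤ) (t : ℝ),
      ∫ x in (0:ℝ)..1, e n x * (u₁ (x,t) : ℂ) = (2 * π * Complex.I * n) * c n t := by
    intro n t
    have hb : u (1, t) = u (0, t) := by
      have := hper 0 t
      rwa [zero_add] at this
    exact parts n t u hud cu cu1 hb
  have I2 : ∀ (n : ℤ) (t : ℝ),
      ∫ x in (0:ℝ)..1, e n x * (u₁₁ (x,t) : ℂ)
        = (2 * π * Complex.I * n)^2 * c n t := by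
    intro n t
    have hb : u₁ (1, t) = u₁ (0, t) := by
      have := per1 0 t
      rwa [zero_add] at this
    have := parts n t u₁ hu1d cu1 cu11 hb
    rw [this, I1]
    ring
  have hdd : ∀ (n : ℤ) (t : ℝ), 0 < t →
      HasDerivAt (d n) ((((2 * π * |(n:ℝ)|) : ℝ) : ℂ)^2 * c n t) t := by
    intro n t ht
    have h1 := hdd' n t
    have h2 : ∫ x in (0:ℝ)..1, e n x * (u₂₂ (x, t) : ℂ)
        = (((2 * π * |(n:ℝ)|) : ℝ) : ℂ)^2 * c n t := by
      have hptw : (fun x => e n x * (u₂₂ (x, t) : ℂ))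
          = fun x => -(e n x * (u₁₁ (x, t) : ℂ)) := by
        funext x
        rw [harm x t ht]
        push_cast
        ring
      rw [hptw, intervalIntegral.integral_neg, I2]
      have hcast : (((2 * π * |(n:ℝ)|) : ℝ) : ℂ)^2 = -(2 * ↑π * Complex.I * (n:ℂ))^2 := by
        rw [← Complex.ofReal_pow]
        rw [mul_pow, mul_pow, sq_abs]
        rw [mul_pow, mul_pow, mul_pow, Complex.I_sq]
        push_cast
        ring
      rw [hcast]
      ring
    rwa [h2] at h1
  -- the good-slice bound
  have hbound : ∀ T : ℝ, ∃ t, T ≤ t ∧ 0 < t ∧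
      (∫ x in (0:ℝ)..1, |u₁ (x, t)|) ≤ 1 ∧ (∫ x in (0:ℝ)..1, |u₂ (x, t)|) ≤ 1 := by
    intro T
    obtain ⟨t, hTt, ht0, hsl⟩ := slice_small _ hgrad T
    have hG : (∫ x in (0:ℝ)..1, ‖fderiv ℝ u (x, t)‖^2) ≤ 1 := by
      rw [intervalIntegral.integral_of_le (by norm_num : (0:ℝ) ≤ 1),
        MeasureTheory.integral_Ioc_eq_integral_Ioo]
      exact hsl
    have cf : Continuous (fun x : ℝ => ‖fderiv ℝ u (x, t)‖^2) :=
      ((hu.continuous_fderiv (by norm_num)).comp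
        (continuous_id.prodMk continuous_const)).norm.pow 2
    have key : ∀ w : ℝ×ℝ→ℝ, Continuous w →
        (∀ x : ℝ, |w (x,t)| ≤ ‖fderiv ℝ u (x,t)‖) →
        (∫ x in (0:ℝ)..1, |w (x, t)|) ≤ 1 := by
      intro w cw hw
      have step1 : (∫ x in (0:ℝ)..1, |w (x, t)|)
          ≤ ∫ x in (0:ℝ)..1, (1 + ‖fderiv ℝ u (x, t)‖^2)/2 := by
        have cw1 : Continuous (fun x : ℝ => |w (x, t)|) := by
          have : Continuous (fun x : ℝ => w (x, t)) :=
            cw.comp (continuous_id.prodMk continuous_const)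
          exact this.abs
        apply intervalIntegral.integral_mono_on (by norm_num : (0:ℝ) ≤ 1)
          (cw1.intervalIntegrable 0 1)
          (((continuous_const.add cf).div_const 2).intervalIntegrable 0 1)
        intro x _
        have h1 := hw x
        simp only [Pi.add_apply]
        nlinarith [norm_nonneg (fderiv ℝ u (x, t)), sq_nonneg (‖fderiv ℝ u (x, t)‖ - 1),
          abs_nonneg (w (x,t))]
      have step2 : (∫ x in (0:ℝ)..1, (1 + ‖fderiv ℝ u (x, t)‖^2)/2) ≤ 1 := by
        rw [intervalIntegral.integral_div,
          intervalIntegral.integral_add intervalIntegrable_const (cf.intervalIntegrable 0 1)]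
        simp only [intervalIntegral.integral_const, smul_eq_mul, sub_zero, mul_one]
        linarith
      linarith
    refine ⟨t, hTt, ht0, key u₁ cu1 ?_, key u₂ cu2 ?_⟩
    · intro x
      have := (fderiv ℝ u (x, t)).le_opNorm (1, 0)
      have hn : ‖((1:ℝ), (0:ℝ))‖ = 1 := by
        rw [Prod.norm_def]
        norm_num
      rw [hn, mul_one] at this
      simpa [hu1def, Real.norm_eq_abs] using this
    · intro x
      have := (fderiv ℝ u (x, t)).le_opNorm (0, 1)
      have hn : ‖((0:ℝ), (1:ℝ))‖ = 1 := by
        rw [Prod.norm_def]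
        norm_num
      rw [hn, mul_one] at this
      simpa [hu2def, Real.norm_eq_abs] using this
  have habs : ∀ n : ℤ, n ≠ 0 → (1:ℝ) ≤ |(n:ℝ)| := by
    intro n hn
    rw [← Int.cast_abs]
    exact_mod_cast Int.one_le_abs (by simpa using hn)
  have normE : ∀ n : ℤ, ‖(2 * (π:ℂ) * Complex.I * (n:ℂ))‖ = 2 * π * |(n:ℝ)| := by
    intro n
    simp only [norm_mul, Complex.norm_I, mul_one, Complex.norm_real, Real.norm_eq_abs,
      Complex.norm_intCast, Complex.norm_ofNat]
    rw [abs_of_pos Real.pi_pos]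
  have cdecay : ∀ n : ℤ, n ≠ 0 → ∀ t, (1/2:ℝ) ≤ t →
      c n t = ((Real.exp (-((2*π*|(n:ℝ)|) * (t - 1/2))) : ℝ) : ℂ) * c n (1/2) := by
    intro n hn
    have hl : (1:ℝ) ≤ 2*π*|(n:ℝ)| := by nlinarith [Real.pi_gt_three, habs n hn]
    apply ode_exp_decay (c n) (d n) (2*π*|(n:ℝ)|) hl (fun t _ => hcd n t) (fun t ht => hdd n t ht)
    intro T
    obtain ⟨t, hTt, ht0, h1, h2⟩ := hbound T
    refine ⟨t, hTt, ?_, ?_⟩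
    · have hnorm1 : ‖(2 * (π:ℂ) * Complex.I * (n:ℂ)) * c n t‖ ≤ 1 := by
        rw [← I1 n t]
        calc ‖∫ x in (0:ℝ)..1, e n x * (u₁ (x,t):ℂ)‖
            ≤ ∫ x in (0:ℝ)..1, ‖e n x * (u₁ (x,t):ℂ)‖ :=
              intervalIntegral.norm_integral_le_integral_norm (by norm_num)
        _ = ∫ x in (0:ℝ)..1, |u₁ (x,t)| := by
              congr 1
              funext x
              rw [norm_mul, he_norm, one_mul, Complex.norm_real, Real.norm_eq_abs]
        _ ≤ 1 := h1
      calc ‖c n t‖ ≤ ‖2 * (π:ℂ) * Complex.I * (n:ℂ)‖ * ‖c n t‖ := by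
            apply le_mul_of_one_le_left (norm_nonneg _)
            rw [normE n]
            exact hl
      _ = ‖(2 * (π:ℂ) * Complex.I * (n:ℂ)) * c n t‖ := (norm_mul _ _).symm
      _ ≤ 1 := hnorm1
    · calc ‖d n t‖
          ≤ ∫ x in (0:ℝ)..1, ‖e n x * (u₂ (x,t):ℂ)‖ :=
            intervalIntegral.norm_integral_le_integral_norm (by norm_num)
      _ = ∫ x in (0:ℝ)..1, |u₂ (x,t)| := by
            congr 1
            funext x
            rw [norm_mul, he_norm, one_mul, Complex.norm_real, Real.norm_eq_abs]
      _ ≤ 1 := h2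
  -- bound on coefficients at t = 1/2
  obtain ⟨M, hM⟩ := (isCompact_Icc : IsCompact (Icc (0:ℝ) 1)).exists_bound_of_continuousOn
    (f := fun x : ℝ => u (x, 1/2))
    ((cu.comp (continuous_id.prodMk continuous_const)).continuousOn)
  have hM0 : 0 ≤ M := le_trans (norm_nonneg _) (hM 0 (by norm_num))
  have hcM : ∀ n : ℤ, ‖c n (1/2)‖ ≤ M := by
    intro n
    have key := intervalIntegral.norm_integral_le_of_norm_le_const (C := M) (a := (0:ℝ)) (b := 1)
      (f := fun x => e n x * (u (x,1/2):ℂ)) ?_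
    · simpa using key
    · intro x hx
      rw [norm_mul, he_norm, one_mul, Complex.norm_real]
      have hx' : x ∈ Icc (0:ℝ) 1 := by
        rw [Set.uIoc_of_le (by norm_num : (0:ℝ) ≤ 1)] at hx
        exact ⟨hx.1.le, hx.2⟩
      exact hM x hx'
  -- zero mode vanishes
  have hc0 : ∀ t : ℝ, 0 ≤ t → c 0 t = 0 := by
    intro t ht
    have he0 : ∀ x : ℝ, e 0 x = 1 := by
      intro x
      simp only [hedef, neg_zero]
      exact fourier_zero
    have hx : c 0 t = ∫ x in (0:ℝ)..1, ((u (x,t) : ℝ) : ℂ) := by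
      simp only [hcdef, he0, one_mul]
    rw [hx, intervalIntegral.integral_ofReal, hmean t ht]
    norm_num
  -- geometric summability
  have hSsum : Summable (fun n : ℤ => Real.exp (-π * |(n:ℝ)|)) := by
    have hgeom : Summable (fun k : ℕ => Real.exp (-π) ^ k) :=
      summable_geometric_of_lt_one (Real.exp_nonneg _)
        (by rw [Real.exp_lt_one_iff]; exact neg_lt_zero.mpr Real.pi_pos)
    apply Summable.of_nat_of_neg
    · apply hgeom.congr
      intro k
      rw [← Real.exp_nat_mul]
      congr 1
      push_cast
      rw [abs_of_nonneg (by positivity : (0:ℝ) ≤ (k:ℝ))]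
      ring
    · apply hgeom.congr
      intro k
      rw [← Real.exp_nat_mul]
      congr 1
      push_cast
      rw [abs_neg, abs_of_nonneg (by positivity : (0:ℝ) ≤ (k:ℝ))]
      ring
  set S : ℝ := ∑' n : ℤ, Real.exp (-π * |(n:ℝ)|) with hSdef
  have hnorm_f : ∀ (m : ℤ) (z : AddCircle (1:ℝ)), ‖fourier m z‖ = 1 := by
    intro m z
    rw [fourier_apply, Circle.norm_coe]
  refine ⟨M * Real.exp (2*π) * S, ?_⟩
  intro y₁ t ht1
  have ht0 : (0:ℝ) < t := lt_of_lt_of_le one_pos ht1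
  have hthalf : (1/2 : ℝ) ≤ t := by linarith
  have hperiodic : Function.Periodic (fun x : ℝ => (u (x, t) : ℂ)) 1 := by
    intro x
    show ((u (x + 1, t) : ℝ) : ℂ) = ((u (x, t) : ℝ) : ℂ)
    exact_mod_cast hper x t
  have hcont : Continuous (fun x : ℝ => (u (x, t) : ℂ)) :=
    Complex.continuous_ofReal.comp (cu.comp (continuous_id.prodMk continuous_const))
  set F : C(AddCircle (1:ℝ), ℂ) := ⟨hperiodic.lift, hcont.quotient_liftOn' _⟩ with hFdef
  have hFcoe : ∀ x : ℝ, F (x : AddCircle (1:ℝ)) = (u (x, t) : ℂ) := fun x => rfl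
  have hcoeff : ∀ n : ℤ, fourierCoeff (F : AddCircle (1:ℝ) → ℂ) n = c n t := by
    intro n
    rw [fourierCoeff_eq_intervalIntegral (F : AddCircle (1:ℝ) → ℂ) n 0]
    simp only [zero_add, div_one, one_smul]
    rw [hcdef]
    apply intervalIntegral.integral_congr
    intro x _
    simp only [smul_eq_mul]
    rfl
  set A : ℝ := M * Real.exp (2*π) * Real.exp (-2 * π * t) with hAdef
  have hbnd : ∀ n : ℤ, ‖fourierCoeff (F : AddCircle (1:ℝ) → ℂ) n‖
      ≤ A * Real.exp (-π * |(n:ℝ)|) := by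
    intro n
    by_cases hn : n = 0
    · subst hn
      rw [hcoeff, hc0 t ht0.le, norm_zero]
      positivity
    · rw [hcoeff, cdecay n hn t hthalf, norm_mul, Complex.norm_real, Real.norm_eq_abs,
        Real.abs_exp]
      have step1 : Real.exp (-(2*π*|(n:ℝ)| * (t - 1/2))) * ‖c n (1/2)‖
          ≤ Real.exp (-(2*π*|(n:ℝ)| * (t - 1/2))) * M := by
        apply mul_le_mul_of_nonneg_left (hcM n) (Real.exp_nonneg _)
      refine le_trans step1 ?_
      rw [hAdef]
      have hexp_ineq : Real.exp (-(2*π*|(n:ℝ)| * (t - 1/2)))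
          ≤ Real.exp (2*π) * Real.exp (-2 * π * t) * Real.exp (-π * |(n:ℝ)|) := by
        rw [← Real.exp_add, ← Real.exp_add]
        apply Real.exp_le_exp.mpr
        have h1 := habs n hn
        nlinarith [Real.pi_pos,
          mul_nonneg (mul_nonneg Real.pi_pos.le (sub_nonneg.mpr (habs n hn)))
            (sub_nonneg.mpr ht1)]
      calc Real.exp (-(2*π*|(n:ℝ)| * (t - 1/2))) * M
          ≤ (Real.exp (2*π) * Real.exp (-2 * π * t) * Real.exp (-π * |(n:ℝ)|)) * M :=
            mul_le_mul_of_nonneg_right hexp_ineq hM0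
      _ = M * Real.exp (2*π) * Real.exp (-2 * π * t) * Real.exp (-π * |(n:ℝ)|) := by ring
  have hsummaj : Summable (fun n : ℤ => A * Real.exp (-π * |(n:ℝ)|)) := hSsum.mul_left _
  have hsumc : Summable (fun n : ℤ => ‖fourierCoeff (F : AddCircle (1:ℝ) → ℂ) n‖) :=
    Summable.of_nonneg_of_le (fun n => norm_nonneg _) hbnd hsummaj
  have hsum : Summable (fourierCoeff (F : AddCircle (1:ℝ) → ℂ)) := hsumc.of_norm
  have hps := has_pointwise_sum_fourier_series_of_summable hsum (y₁ : AddCircle (1:ℝ))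
  have hgoal1 : |u (y₁, t)| = ‖F (y₁ : AddCircle (1:ℝ))‖ := by
    rw [hFcoe y₁, Complex.norm_real, Real.norm_eq_abs]
  rw [hgoal1]
  have hsumnorm : Summable (fun n : ℤ =>
      ‖fourierCoeff (F : AddCircle (1:ℝ) → ℂ) n • fourier n (y₁ : AddCircle (1:ℝ))‖) := by
    apply hsumc.congr
    intro n
    rw [norm_smul, hnorm_f, mul_one]
  have hFval : ‖F (y₁ : AddCircle (1:ℝ))‖ ≤ ∑' n : ℤ, A * Real.exp (-π * |(n:ℝ)|) := by
    rw [← hps.tsum_eq]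
    refine le_trans (norm_tsum_le_tsum_norm hsumnorm) ?_
    apply Summable.tsum_le_tsum ?_ hsumnorm hsummaj
    intro n
    rw [norm_smul, hnorm_f, mul_one]
    exact hbnd n
  rw [tsum_mul_left] at hFval
  calc ‖F (y₁ : AddCircle (1:ℝ))‖ ≤ A * S := hFval
  _ = M * Real.exp (2*π) * S * Real.exp (-2 * π * t) := by rw [hAdef]; ring
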